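/- Let m be a positive integer and let p, q be coprime integers. Let H be the additive subgroup of ℚ × ℚ consisting of all pairs (a/m, b) with a, b ∈ ℤ. Then the greatest positive integer k for which there exists v ∈ H with k·v = (p, q) is gcd(m, |q|); that is, gcd(m, |q|) belongs to the set {k ∈ ℕ : k ≥ 1 and ∃ v ∈ H, k·v = (p, q)} and is an upper bound for it. -/

import Mathlib

/-- For `m > 0` and coprime integers `p, q`, the greatest positive integer
`k` such that `(p, q)` is `k` times an element of `H = (1/m)ℤ × ℤ ⊆ ℚ × ℚ` is
`gcd(m, |q|)`. -/
theorem maximal_root_in_extended_lattice (m p q : ℤ) (hm : 0 < m) (hpq : IsCoprime p q) :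
    Int.gcd m q ∈ {k : ℕ | 1 ≤ k ∧ ∃ v : ℚ × ℚ,
        (∃ a b : ℤ, v.1 = (a : ℚ) / m ∧ v.2 = (b : ℚ)) ∧ k • v = ((p : ℚ), (q : ℚ))} ∧
    ∀ k ∈ {k : ℕ | 1 ≤ k ∧ ∃ v : ℚ × ℚ,
        (∃ a b : ℤ, v.1 = (a : ℚ) / m ∧ v.2 = (b : ℚ)) ∧ k • v = ((p : ℚ), (q : ℚ))},
      k ≤ Int.gcd m q := by
  have hm0 : (m : ℚ) ≠ 0 := by exact_mod_cast hm.ne'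
  set g : ℕ := Int.gcd m q with hgdef
  have hgpos : 0 < g := Int.gcd_pos_of_ne_zero_left q hm.ne'
  have hg0 : ((g : ℤ) : ℚ) ≠ 0 := by exact_mod_cast (Int.natCast_pos.mpr hgpos).ne'
  obtain ⟨m', hm'⟩ : (g : ℤ) ∣ m := Int.gcd_dvd_left m q
  obtain ⟨q', hq'⟩ : (g : ℤ) ∣ q := Int.gcd_dvd_right m q
  constructor
  · refine ⟨hgpos, ((↑(p * m') : ℚ) / m, (q' : ℚ)), ⟨p * m', q', rfl, rfl⟩, ?_⟩
    have : (g : ℕ) • ((↑(p * m') : ℚ) / m, (q' : ℚ))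
        = ((g : ℚ) * ((↑(p * m') : ℚ) / m), (g : ℚ) * q') := by
      simp [Prod.smul_def, nsmul_eq_mul]
    rw [this, Prod.mk.injEq]
    constructor
    · have hmm : (m : ℚ) = (g : ℚ) * (m' : ℚ) := by exact_mod_cast congrArg (Int.cast : ℤ → ℚ) hm'
      have hm'0 : (m' : ℚ) ≠ 0 := by
        intro h; rw [hmm, h, mul_zero] at hm0; exact hm0 rfl
      rw [hmm]
      push_cast
      field_simp
    · have : (q : ℚ) = (g : ℚ) * (q' : ℚ) := by exact_mod_cast congrArg (Int.cast : ℤ → ℚ) hq'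
      rw [this]
  · rintro k ⟨hk1, ⟨v1, v2⟩, ⟨a, b, ha, hb⟩, hkv⟩
    simp only at ha hb
    subst ha hb
    rw [Prod.smul_def, Prod.mk.injEq] at hkv
    obtain ⟨h1, h2⟩ := hkv
    have h1' : (k : ℚ) * ((a : ℚ) / m) = p := by simpa [nsmul_eq_mul] using h1
    have h2' : (k : ℚ) * (b : ℚ) = q := by simpa [nsmul_eq_mul] using h2
    have hkb : (k : ℤ) * b = q := by exact_mod_cast h2'
    have hka : (k : ℤ) * a = p * m := by
      have : (k : ℚ) * a = p * m := by
        field_simp at h1'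
        linarith [h1']
      exact_mod_cast this
    have hkq : (k : ℤ) ∣ q := ⟨b, hkb.symm⟩
    have hcop : IsCoprime (p : ℤ) (k : ℤ) := hpq.of_isCoprime_of_dvd_right hkq
    have hkm : (k : ℤ) ∣ m := (hcop.symm).dvd_of_dvd_mul_left ⟨a, hka.symm⟩
    have : (k : ℤ) ∣ (g : ℤ) := Int.dvd_coe_gcd hkm hkq
    exact Nat.le_of_dvd hgpos (Int.natCast_dvd_natCast.mp this)
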